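/- Let R be a commutative ring, a ∈ R, and r ≥ q ≥ 1 integers. In the ring A = R[T_1,…,T_{r+1}]/(T_1⋯T_q − a), the module of Kähler differentials Ω^{r+1}_{A/R} (the (r+1)-st exterior power of Ω^1_{A/R}) is annihilated by a. -/

import Mathlib

open MvPolynomial Pointwise

theorem derivation_finset_prod {R A M : Type*} [CommRing R] [CommRing A] [Algebra R A]
    [AddCommGroup M] [Module A M] [Module R M] (D : Derivation R A M)
    {ι : Type*} [DecidableEq ι] (s : Finset ι) (f : ι → A) :
    D (∏ i ∈ s, f i) = ∑ i ∈ s, (∏ j ∈ s.erase i, f j) • D (f i) := by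
  induction s using Finset.induction_on with
  | empty => simp
  | @insert a s ha ih =>
    rw [Finset.prod_insert ha]
    rw [Derivation.leibniz]
    rw [ih]
    rw [Finset.smul_sum]
    rw [Finset.sum_insert ha, Finset.erase_insert ha]
    rw [add_comm]
    congr 1
    refine Finset.sum_congr rfl fun i hi => ?_
    have hia : i ≠ a := fun h => ha (h ▸ hi)
    rw [Finset.erase_insert_of_ne hia.symm,
      Finset.prod_insert (fun h => ha (Finset.mem_of_mem_erase h)), mul_smul]

theorem span_D_X {R : Type*} [CommRing R] {n : ℕ} (I : Ideal (MvPolynomial (Fin n) R)) :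
    Submodule.span (MvPolynomial (Fin n) R ⧸ I)
      (Set.range fun i : Fin n =>
        (KaehlerDifferential.D R (MvPolynomial (Fin n) R ⧸ I)) (Ideal.Quotient.mk I (X i)))
      = ⊤ := by
  rw [eq_top_iff, ← KaehlerDifferential.span_range_derivation, Submodule.span_le]
  rintro _ ⟨x, rfl⟩
  obtain ⟨p, rfl⟩ := Ideal.Quotient.mk_surjective x
  induction p using MvPolynomial.induction_on with
  | C r =>
    have : Ideal.Quotient.mk I (C r) = algebraMap R _ r := by
      rw [IsScalarTower.algebraMap_apply R (MvPolynomial (Fin n) R),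
        Ideal.Quotient.algebraMap_eq, MvPolynomial.algebraMap_eq]
    rw [this, Derivation.map_algebraMap]
    exact Submodule.zero_mem _
  | add p q hp hq =>
    rw [map_add, map_add]
    exact Submodule.add_mem _ hp hq
  | mul_X p i hp =>
    rw [map_mul, Derivation.leibniz]
    exact Submodule.add_mem _
      (Submodule.smul_mem _ _ (Submodule.subset_span ⟨i, rfl⟩))
      (Submodule.smul_mem _ _ hp)

set_option maxHeartbeats 1000000 in
set_option synthInstance.maxHeartbeats 1000000 in
theorem exteriorPower_kaehlerDifferential_annihilated
    (R : Type*) [CommRing R] (a : R) (r q : ℕ) (hq : 1 ≤ q) (hqr : q ≤ r + 1) :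
    ∀ ω : ⋀[(MvPolynomial (Fin (r + 1)) R ⧸
        Ideal.span {(∏ i ∈ Finset.univ.filter (fun i : Fin (r + 1) => (i : ℕ) < q), X i)
          - C a})]^(r + 1)
      (Ω[(MvPolynomial (Fin (r + 1)) R ⧸
        Ideal.span {(∏ i ∈ Finset.univ.filter (fun i : Fin (r + 1) => (i : ℕ) < q), X i)
          - C a})⁄R]),
    algebraMap R (MvPolynomial (Fin (r + 1)) R ⧸
        Ideal.span {(∏ i ∈ Finset.univ.filter (fun i : Fin (r + 1) => (i : ℕ) < q), X i)
          - C a}) a • ω = 0 := by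
  set P := MvPolynomial (Fin (r + 1)) R with hP
  set I : Ideal P := Ideal.span
    {(∏ i ∈ Finset.univ.filter (fun i : Fin (r + 1) => (i : ℕ) < q), X i) - C a} with hI
  set A := P ⧸ I with hA
  set t : Fin (r + 1) → A := fun i => Ideal.Quotient.mk I (X i) with ht
  set D := KaehlerDifferential.D R A with hD
  set F : Finset (Fin (r + 1)) :=
    Finset.univ.filter (fun i : Fin (r + 1) => (i : ℕ) < q) with hF
  set a' : A := algebraMap R A a with ha'
  set v : Fin (r + 1) → Ω[A⁄R] := fun i => D (t i) with hv
  -- the product of the variables equals `a` in `A`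
  have h0F : (0 : Fin (r + 1)) ∈ F := by
    simp only [hF, Finset.mem_filter, Finset.mem_univ, true_and, Fin.val_zero]
    omega
  have hprod : (∏ i ∈ F, t i) = a' := by
    have h1 : (∏ i ∈ F, t i) = Ideal.Quotient.mk I (∏ i ∈ F, X i) := (map_prod _ _ _).symm
    have h2 : Ideal.Quotient.mk I (∏ i ∈ F, (X i : P)) = Ideal.Quotient.mk I (C a) := by
      rw [Ideal.Quotient.mk_eq_mk_iff_sub_mem]
      exact Ideal.subset_span rfl
    have h3 : Ideal.Quotient.mk I (C a) = a' := by
      rw [ha', IsScalarTower.algebraMap_apply R P A,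
        Ideal.Quotient.algebraMap_eq, MvPolynomial.algebraMap_eq]
    rw [h1, h2, h3]
  have hrel : ∑ i ∈ F, (∏ j ∈ F.erase i, t j) • v i = 0 := by
    rw [hv]
    rw [← derivation_finset_prod D F t, hprod, ha', Derivation.map_algebraMap]
  -- key computation: `a'` kills the top wedge of the `d tᵢ`
  have core : a' • ExteriorAlgebra.ιMulti A (r + 1) v = 0 := by
    have h1 : a' • ExteriorAlgebra.ιMulti A (r + 1) v
        = (ExteriorAlgebra.ιMulti A (r + 1)) (Function.update v 0 (a' • v 0)) := by
      rw [AlternatingMap.map_update_smul, Function.update_eq_self]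
    have h3 : (∏ j ∈ F.erase 0, t j) • v 0
        = -∑ i ∈ F.erase 0, (∏ j ∈ F.erase i, t j) • v i := by
      apply eq_neg_of_add_eq_zero_left
      rw [← Finset.add_sum_erase F _ h0F] at hrel
      exact hrel
    have h2 : a' • v 0 = t 0 • ((∏ j ∈ F.erase 0, t j) • v 0) := by
      rw [← hprod, ← Finset.mul_prod_erase F t h0F]; exact mul_smul (t 0) (∏ x ∈ F.erase 0, t x) (v 0)
    rw [h1, h2, h3, smul_neg (t 0) (∑ i ∈ F.erase 0, (∏ j ∈ F.erase i, t j) • v i), Finset.smul_sum, AlternatingMap.map_update_neg,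
      AlternatingMap.map_update_sum, neg_eq_zero]
    refine Finset.sum_eq_zero fun i hi => ?_
    have hi0 : i ≠ 0 := (Finset.mem_erase.mp hi).1
    rw [AlternatingMap.map_update_smul, AlternatingMap.map_update_smul,
      (ExteriorAlgebra.ιMulti A (r + 1)).map_eq_zero_of_eq
        (Function.update v 0 (v i)) (i := 0) (j := i)
        (by rw [Function.update_self, Function.update_of_ne hi0]) (Ne.symm hi0),
      smul_zero, smul_zero]
  -- kills all wedges of `d t_{g i}`
  have key : ∀ g : Fin (r + 1) → Fin (r + 1),
      a' • ExteriorAlgebra.ιMulti A (r + 1) (fun i => v (g i)) = 0 := by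
    intro g
    by_cases hg : Function.Injective g
    · have hbij : Function.Bijective g := Finite.injective_iff_bijective.mp hg
      set σ : Equiv.Perm (Fin (r + 1)) := Equiv.ofBijective g hbij with hσ
      have : (fun i => v (g i)) = v ∘ σ := rfl
      rw [this, AlternatingMap.map_perm]
      rw [smul_comm, core, smul_zero]
    · obtain ⟨i, j, hgij, hij⟩ := Function.not_injective_iff.mp hg
      rw [(ExteriorAlgebra.ιMulti A (r + 1)).map_eq_zero_of_eq
        (fun i => v (g i)) (i := i) (j := j) (congrArg v hgij) hij, smul_zero]
  -- every element of the exterior power is a span of such wedges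
  have hspan : (⋀[A]^(r + 1) (Ω[A⁄R]) : Submodule A (ExteriorAlgebra A (Ω[A⁄R]))) =
      Submodule.span A ((Set.range fun i => ExteriorAlgebra.ι A (v i)) ^ (r + 1)) := by
    have hr : LinearMap.range (ExteriorAlgebra.ι A (M := Ω[A⁄R])) =
        Submodule.span A (Set.range fun i => ExteriorAlgebra.ι A (v i)) := by
      conv_lhs => rw [LinearMap.range_eq_map, ← span_D_X I, Submodule.map_span]
      rw [← Set.range_comp]
      rfl
    rw [ExteriorAlgebra.exteriorPower, hr, Submodule.span_pow]
  intro ω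
  have hmem : (ω : ExteriorAlgebra A (Ω[A⁄R])) ∈
      Submodule.span A ((Set.range fun i => ExteriorAlgebra.ι A (v i)) ^ (r + 1)) := by
    rw [← hspan]; exact ω.2
  have hz : ∀ x : ExteriorAlgebra A (Ω[A⁄R]), x ∈
      Submodule.span A ((Set.range fun i => ExteriorAlgebra.ι A (v i)) ^ (r + 1)) →
      a' • x = 0 := by
    intro x hx
    induction hx using Submodule.span_induction with
    | mem x hx =>
      obtain ⟨f, rfl⟩ := Set.mem_pow.mp hx
      choose g hg using fun i => (f i).2
      have : (List.ofFn fun i => ((f i : ExteriorAlgebra A (Ω[A⁄R])))).prod =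
          ExteriorAlgebra.ιMulti A (r + 1) (fun i => v (g i)) := by
        rw [ExteriorAlgebra.ιMulti_apply]
        exact congrArg List.prod (congrArg List.ofFn (funext fun i => (hg i).symm))
      rw [this]
      exact key g
    | zero => simp
    | add x y _ _ hx hy => exact (smul_add a' x y).trans ((congrArg₂ (· + ·) hx hy).trans (add_zero 0))
    | smul c x _ hx => rw [smul_comm, hx, smul_zero]
  exact Subtype.ext (by rw [Submodule.coe_smul, hz _ hmem]; rfl)
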